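/- Let t > 0 and let α, β be real numbers with 0 ≤ β ≤ α. Then: (i) for every x ∈ ℝ, (4πt)^{-1/2}·∫_ℝ exp(−α|x| − (x−y)²/(4t) + β|y|) dy ≤ 2·exp(β²t); and (ii) for every y ∈ ℝ, (4πt)^{-1/2}·∫_ℝ exp(−α|x| − (x−y)²/(4t) + β|y|) dx ≤ 2·exp(α²t). -/

import Mathlib

open MeasureTheory

lemma gauss_integrable (s d : ℝ) (hs : 0 < s) :
    Integrable (fun u : ℝ => Real.exp (-(u - d) ^ 2 / (4 * s))) := by
  have h : Integrable (fun u : ℝ => Real.exp (-(1 / (4 * s)) * u ^ 2)) :=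
    integrable_exp_neg_mul_sq (by positivity)
  have h2 := h.comp_sub_right d
  convert h2 using 2 with u
  field_simp

lemma gauss_integral (s d : ℝ) (hs : 0 < s) :
    ∫ u : ℝ, Real.exp (-(u - d) ^ 2 / (4 * s)) = Real.sqrt (4 * Real.pi * s) := by
  have h1 : ∀ u : ℝ, Real.exp (-(u - d) ^ 2 / (4 * s)) =
      (fun v : ℝ => Real.exp (-(1 / (4 * s)) * v ^ 2)) (u - d) := by
    intro u; simp only; congr 1; field_simp
  simp_rw [h1]
  rw [integral_sub_right_eq_self (fun v : ℝ => Real.exp (-(1 / (4 * s)) * v ^ 2)) d,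
    integral_gaussian]
  congr 1
  field_simp

lemma key_bound (t c x₀ : ℝ) (ht : 0 < t) (hc : 0 ≤ c) (f : ℝ → ℝ)
    (hf0 : ∀ u, 0 ≤ f u)
    (hf : ∀ u, f u ≤ Real.exp (-(u - x₀) ^ 2 / (4 * t) + c * |u - x₀|)) :
    (Real.sqrt (4 * Real.pi * t))⁻¹ * ∫ u : ℝ, f u ≤ 2 * Real.exp (c ^ 2 * t) := by
  set g : ℝ → ℝ := fun u => Real.exp (c ^ 2 * t) *
      (Real.exp (-(u - (x₀ + 2 * c * t)) ^ 2 / (4 * t)) +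
       Real.exp (-(u - (x₀ - 2 * c * t)) ^ 2 / (4 * t))) with hg
  have hgi : Integrable g :=
    ((gauss_integrable t (x₀ + 2 * c * t) ht).add
      (gauss_integrable t (x₀ - 2 * c * t) ht)).const_mul _
  have hfg : ∀ u, f u ≤ g u := by
    intro u
    refine (hf u).trans ?_
    have h1 : Real.exp (-(u - x₀) ^ 2 / (4 * t) + c * (u - x₀)) =
        Real.exp (c ^ 2 * t) * Real.exp (-(u - (x₀ + 2 * c * t)) ^ 2 / (4 * t)) := by
      rw [← Real.exp_add]; congr 1; field_simp; ring
    have h2 : Real.exp (-(u - x₀) ^ 2 / (4 * t) + c * (-(u - x₀))) =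
        Real.exp (c ^ 2 * t) * Real.exp (-(u - (x₀ - 2 * c * t)) ^ 2 / (4 * t)) := by
      rw [← Real.exp_add]; congr 1; field_simp; ring
    have hA : 0 < Real.exp (c ^ 2 * t) * Real.exp (-(u - (x₀ + 2 * c * t)) ^ 2 / (4 * t)) := by
      positivity
    have hB : 0 < Real.exp (c ^ 2 * t) * Real.exp (-(u - (x₀ - 2 * c * t)) ^ 2 / (4 * t)) := by
      positivity
    have hgu : g u = Real.exp (c ^ 2 * t) * Real.exp (-(u - (x₀ + 2 * c * t)) ^ 2 / (4 * t)) +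
        Real.exp (c ^ 2 * t) * Real.exp (-(u - (x₀ - 2 * c * t)) ^ 2 / (4 * t)) := by
      rw [hg]; ring
    rcases abs_cases (u - x₀) with ⟨h, _⟩ | ⟨h, _⟩
    · rw [h]; rw [hgu, ← h1]; linarith
    · rw [h]; rw [hgu, ← h2]; linarith
  have hI : ∫ u, f u ≤ ∫ u, g u :=
    integral_mono_of_nonneg (Filter.Eventually.of_forall hf0) hgi
      (Filter.Eventually.of_forall hfg)
  have hIg : ∫ u, g u = Real.exp (c ^ 2 * t) * (2 * Real.sqrt (4 * Real.pi * t)) := by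
    rw [hg]
    rw [MeasureTheory.integral_const_mul,
      integral_add (gauss_integrable _ _ ht) (gauss_integrable _ _ ht),
      gauss_integral _ _ ht, gauss_integral _ _ ht]
    ring
  have hs : 0 < Real.sqrt (4 * Real.pi * t) :=
    Real.sqrt_pos.mpr (by positivity)
  calc (Real.sqrt (4 * Real.pi * t))⁻¹ * ∫ u, f u
      ≤ (Real.sqrt (4 * Real.pi * t))⁻¹ * ∫ u, g u := by
        apply mul_le_mul_of_nonneg_left hI (by positivity)
    _ = 2 * Real.exp (c ^ 2 * t) := by rw [hIg]; field_simp

/-- Schur-test row/column bounds for the weighted heat kernel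
`(x,y) ↦ e^{−α|x|} k_t(x,y) e^{β|y|}` on the real line, `0 ≤ β ≤ α`, `t > 0`. -/
theorem stmt3 (t a b : ℝ) (ht : 0 < t) (hb : 0 ≤ b) (hba : b ≤ a) :
    (∀ x : ℝ,
      (Real.sqrt (4 * Real.pi * t))⁻¹ *
          ∫ y : ℝ, Real.exp (-a * |x| - (x - y) ^ 2 / (4 * t) + b * |y|)
        ≤ 2 * Real.exp (b ^ 2 * t)) ∧
    (∀ y : ℝ,
      (Real.sqrt (4 * Real.pi * t))⁻¹ *
          ∫ x : ℝ, Real.exp (-a * |x| - (x - y) ^ 2 / (4 * t) + b * |y|)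
        ≤ 2 * Real.exp (a ^ 2 * t)) := by
  constructor
  · intro x
    apply key_bound t b x ht hb
    · intro u; positivity
    · intro y
      apply Real.exp_le_exp.mpr
      have htri : |y| ≤ |x| + |y - x| := by
        have := abs_sub_abs_le_abs_sub y x
        linarith
      have hax : b * |x| ≤ a * |x| := mul_le_mul_of_nonneg_right hba (abs_nonneg x)
      have hby : b * |y| ≤ b * |x| + b * |y - x| := by nlinarith [abs_nonneg (y - x)]
      have h1 : -a * |x| - (x - y) ^ 2 / (4 * t) + b * |y| =
          -((y - x) ^ 2 / (4 * t)) + (-(a * |x|) + b * |y|) := by ring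
      have h2 : -(y - x) ^ 2 / (4 * t) + b * |y - x| =
          -((y - x) ^ 2 / (4 * t)) + b * |y - x| := by ring
      rw [h1, h2]
      exact add_le_add (le_refl _) (by linarith)
  · intro y
    apply key_bound t a y ht (hb.trans hba)
    · intro u; positivity
    · intro x
      apply Real.exp_le_exp.mpr
      have htri : |y| ≤ |x| + |x - y| := by
        have h := abs_sub_abs_le_abs_sub y x
        rw [abs_sub_comm] at h
        linarith
      have hby : b * |y| ≤ a * |y| := mul_le_mul_of_nonneg_right hba (abs_nonneg y)
      have hay : a * |y| ≤ a * |x| + a * |x - y| := by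
        nlinarith [abs_nonneg (x - y), hb.trans hba]
      have h1 : -a * |x| - (x - y) ^ 2 / (4 * t) + b * |y| =
          -((x - y) ^ 2 / (4 * t)) + (-(a * |x|) + b * |y|) := by ring
      have h2 : -(x - y) ^ 2 / (4 * t) + a * |x - y| =
          -((x - y) ^ 2 / (4 * t)) + a * |x - y| := by ring
      rw [h1, h2]
      exact add_le_add (le_refl _) (by linarith)
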